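/- Let (X, μ) be a finite measure space and (B_k)_{k∈ℕ} a sequence of measurable sets. Then μ(limsup_k B_k) ≥ limsup_{Q→∞} (∑_{k=1}^Q μ(B_k))² / (∑_{k,j=1}^Q μ(B_k ∩ B_j)), provided ∑_k μ(B_k) = ∞. -/

import Mathlib

open MeasureTheory Filter ENNReal Topology
lemma lintegral_sq_cs {X : Type*} [MeasurableSpace X] (μ : Measure X)
    (f : X → ℝ≥0∞) (hf : Measurable f) {U : Set X} (hU : MeasurableSet U)
    (h0 : ∀ x ∉ U, f x = 0) :
    (∫⁻ x, f x ∂μ) ^ 2 ≤ μ U * ∫⁻ x, f x ^ 2 ∂μ := by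
  have hpq : Real.HolderConjugate 2 2 := ⟨by norm_num, by norm_num, by norm_num⟩
  have hfe : ∀ x, f x = f x * U.indicator 1 x := by
    intro x
    by_cases hx : x ∈ U
    · simp [hx]
    · simp [hx, h0 x hx]
  have hH := ENNReal.lintegral_mul_le_Lp_mul_Lq μ hpq hf.aemeasurable
    ((measurable_one.indicator hU).aemeasurable)
  have h1 : ∫⁻ x, f x ∂μ ≤ (∫⁻ x, f x ^ (2:ℝ) ∂μ) ^ (1/2 : ℝ) *
      (∫⁻ x, (U.indicator 1 x) ^ (2:ℝ) ∂μ) ^ (1/2 : ℝ) := by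
    calc ∫⁻ x, f x ∂μ = ∫⁻ x, f x * U.indicator 1 x ∂μ := by
          exact lintegral_congr fun x => hfe x
      _ ≤ _ := hH
  have hind : ∫⁻ x, (U.indicator 1 x) ^ (2:ℝ) ∂μ = μ U := by
    have : ∀ x, (U.indicator (1 : X → ℝ≥0∞) x) ^ (2:ℝ) = U.indicator 1 x := by
      intro x
      by_cases hx : x ∈ U <;> simp [hx]
    rw [lintegral_congr this]
    simp [lintegral_indicator, hU]
  rw [hind] at h1
  have h2 : (∫⁻ x, f x ∂μ) ^ 2 ≤
      ((∫⁻ x, f x ^ (2:ℝ) ∂μ) ^ (1/2 : ℝ) * (μ U) ^ (1/2 : ℝ)) ^ 2 :=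
    pow_le_pow_left' h1 2
  calc (∫⁻ x, f x ∂μ) ^ 2 ≤ _ := h2
    _ = (∫⁻ x, f x ^ (2:ℝ) ∂μ) * μ U := by
        rw [mul_pow, ← ENNReal.rpow_natCast (_ ^ (1/2:ℝ)) 2,
          ← ENNReal.rpow_natCast ((μ U) ^ (1/2:ℝ)) 2,
          ← ENNReal.rpow_mul, ← ENNReal.rpow_mul]
        norm_num
    _ = μ U * ∫⁻ x, f x ^ 2 ∂μ := by
        rw [mul_comm]
        congr 1
        apply lintegral_congr
        intro x
        rw [← ENNReal.rpow_natCast (f x) 2]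
        norm_num

lemma chung_erdos_key {X : Type*} [MeasurableSpace X] (μ : Measure X)
    (B : ℕ → Set X) (hB : ∀ k, MeasurableSet (B k)) (N Q : ℕ) :
    (∑ k ∈ Finset.Icc N Q, μ (B k)) ^ 2 ≤
      μ (⋃ k ∈ Set.Ici N, B k) *
        ∑ k ∈ Finset.Icc N Q, ∑ j ∈ Finset.Icc N Q, μ (B k ∩ B j) := by
  set f : X → ℝ≥0∞ := fun x => ∑ k ∈ Finset.Icc N Q, (B k).indicator 1 x with hfdef
  have hf : Measurable f := by
    apply Finset.measurable_sum
    intro k _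
    exact measurable_one.indicator (hB k)
  have hU : MeasurableSet (⋃ k ∈ Set.Ici N, B k) :=
    MeasurableSet.biUnion (Set.to_countable _) fun k _ => hB k
  have h0 : ∀ x ∉ ⋃ k ∈ Set.Ici N, B k, f x = 0 := by
    intro x hx
    simp only [Set.mem_iUnion, not_exists] at hx
    apply Finset.sum_eq_zero
    intro k hk
    rw [Finset.mem_Icc] at hk
    exact Set.indicator_of_notMem (hx k hk.1) _
  have h1 : ∫⁻ x, f x ∂μ = ∑ k ∈ Finset.Icc N Q, μ (B k) := by
    rw [hfdef]
    rw [lintegral_finset_sum _ fun k _ => measurable_one.indicator (hB k)]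
    refine Finset.sum_congr rfl fun k _ => ?_
    simp [lintegral_indicator, hB k]
  have h2 : ∫⁻ x, f x ^ 2 ∂μ =
      ∑ k ∈ Finset.Icc N Q, ∑ j ∈ Finset.Icc N Q, μ (B k ∩ B j) := by
    have hfx : ∀ x, f x ^ 2 = ∑ k ∈ Finset.Icc N Q, ∑ j ∈ Finset.Icc N Q,
        (B k ∩ B j).indicator (1 : X → ℝ≥0∞) x := by
      intro x
      rw [hfdef, sq, Finset.sum_mul_sum]
      refine Finset.sum_congr rfl fun k _ => Finset.sum_congr rfl fun j _ => ?_
      rw [Set.inter_indicator_one]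
      rfl
    rw [lintegral_congr hfx,
      lintegral_finset_sum _ fun k _ => Finset.measurable_sum _
        fun j _ => measurable_one.indicator ((hB k).inter (hB j))]
    refine Finset.sum_congr rfl fun k _ => ?_
    rw [lintegral_finset_sum _ fun j _ => measurable_one.indicator ((hB k).inter (hB j))]
    refine Finset.sum_congr rfl fun j _ => ?_
    simp [lintegral_indicator, (hB k).inter (hB j)]
  rw [← h1, ← h2]
  exact lintegral_sq_cs μ f hf hU h0

theorem stmt2 {X : Type*} [MeasurableSpace X] (μ : Measure X) [IsFiniteMeasure μ]
    (B : ℕ → Set X) (hB : ∀ k, MeasurableSet (B k))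
    (hdiv : ∑' k, μ (B k) = ⊤) :
    Filter.atTop.limsup (fun Q : ℕ =>
        (∑ k ∈ Finset.Icc 1 Q, μ (B k)) ^ 2 /
          ∑ k ∈ Finset.Icc 1 Q, ∑ j ∈ Finset.Icc 1 Q, μ (B k ∩ B j)) ≤
      μ (Filter.limsup B Filter.atTop) := by
  set L := Filter.atTop.limsup (fun Q : ℕ =>
      (∑ k ∈ Finset.Icc 1 Q, μ (B k)) ^ 2 /
        ∑ k ∈ Finset.Icc 1 Q, ∑ j ∈ Finset.Icc 1 Q, μ (B k ∩ B j)) with hLdef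
  have main : ∀ n : ℕ, L ≤ μ (⋃ k ∈ Set.Ici (n + 1), B k) := by
    intro n
    set N := n + 1 with hN
    set U := ⋃ k ∈ Set.Ici N, B k with hUdef
    set S : ℕ → ℝ≥0∞ := fun Q => ∑ k ∈ Finset.Icc N Q, μ (B k) with hSdef
    set T : ℕ → ℝ≥0∞ :=
      fun Q => ∑ k ∈ Finset.Icc N Q, ∑ j ∈ Finset.Icc N Q, μ (B k ∩ B j) with hTdef
    set C : ℝ≥0∞ := ∑ k ∈ Finset.Icc 1 n, μ (B k) with hCdef
    have hCfin : C ≠ ⊤ := (ENNReal.sum_lt_top.2 fun k _ => measure_lt_top μ _).ne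
    have hSfin : ∀ Q, S Q ≠ ⊤ := fun Q =>
      (ENNReal.sum_lt_top.2 fun k _ => measure_lt_top μ _).ne
    have hSmono : Monotone S := fun a b hab =>
      Finset.sum_le_sum_of_subset (Finset.Icc_subset_Icc_right hab)
    have hStop : Tendsto S atTop (𝓝 ⊤) := by
      have h1 := tendsto_atTop_iSup hSmono
      have h2 : ⨆ Q, S Q = ⊤ := by
        by_contra h
        have hhead : (∑ k ∈ Finset.Icc 0 n, μ (B k)) ≠ ⊤ :=
          (ENNReal.sum_lt_top.2 fun k _ => measure_lt_top μ _).ne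
        have hle : ∑' k, μ (B k) ≤ (∑ k ∈ Finset.Icc 0 n, μ (B k)) + ⨆ Q, S Q := by
          rw [ENNReal.tsum_eq_iSup_sum]
          refine iSup_le fun s => ?_
          have hsub : s ⊆ Finset.Icc 0 n ∪ Finset.Icc N (s.sup id) := by
            intro k hk
            have hkQ : k ≤ s.sup id := Finset.le_sup (f := id) hk
            simp only [Finset.mem_union, Finset.mem_Icc]
            omega
          have hdisj : Disjoint (Finset.Icc 0 n) (Finset.Icc N (s.sup id)) := by
            rw [Finset.disjoint_left]
            intro k hk hk'
            simp only [Finset.mem_Icc] at hk hk'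
            omega
          calc ∑ k ∈ s, μ (B k)
              ≤ ∑ k ∈ Finset.Icc 0 n ∪ Finset.Icc N (s.sup id), μ (B k) :=
                Finset.sum_le_sum_of_subset hsub
            _ = (∑ k ∈ Finset.Icc 0 n, μ (B k)) + S (s.sup id) := by
                rw [Finset.sum_union hdisj]
            _ ≤ _ := add_le_add_right (le_iSup S (s.sup id)) _
        rw [hdiv, top_le_iff] at hle
        exact (ENNReal.add_ne_top.mpr ⟨hhead, h⟩) hle
      rwa [h2] at h1
    have hpos : ∀ᶠ Q in atTop, (1 : ℝ≥0∞) < S Q :=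
      hStop.eventually (lt_mem_nhds (by simp : (1:ℝ≥0∞) < ⊤))
    have hev : ∀ᶠ Q in atTop,
        (∑ k ∈ Finset.Icc 1 Q, μ (B k)) ^ 2 /
            (∑ k ∈ Finset.Icc 1 Q, ∑ j ∈ Finset.Icc 1 Q, μ (B k ∩ B j)) ≤
          (C / S Q + 1) ^ 2 * μ U := by
      filter_upwards [hpos] with Q hQ
      have hs0 : S Q ≠ 0 := (zero_lt_one.trans hQ).ne'
      have hsplit : ∑ k ∈ Finset.Icc 1 Q, μ (B k) ≤ C + S Q := by
        rw [hCdef]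
        calc ∑ k ∈ Finset.Icc 1 Q, μ (B k)
            ≤ ∑ k ∈ Finset.Icc 1 n ∪ Finset.Icc N Q, μ (B k) := by
              refine Finset.sum_le_sum_of_subset ?_
              intro k hk
              simp only [Finset.mem_Icc] at hk
              simp only [Finset.mem_union, Finset.mem_Icc]
              omega
          _ ≤ (∑ k ∈ Finset.Icc 1 n, μ (B k)) + S Q := by
              refine le_trans (le_of_eq ?_) le_rfl
              rw [Finset.sum_union ?_]
              rw [Finset.disjoint_left]
              intro k hk hk'
              simp only [Finset.mem_Icc] at hk hk'
              omega
      have hsub : Finset.Icc N Q ⊆ Finset.Icc 1 Q :=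
        Finset.Icc_subset_Icc_left (by omega)
      have hTle : T Q ≤ ∑ k ∈ Finset.Icc 1 Q, ∑ j ∈ Finset.Icc 1 Q, μ (B k ∩ B j) := by
        calc T Q ≤ ∑ k ∈ Finset.Icc N Q, ∑ j ∈ Finset.Icc 1 Q, μ (B k ∩ B j) :=
              Finset.sum_le_sum fun k _ => Finset.sum_le_sum_of_subset hsub
          _ ≤ _ := Finset.sum_le_sum_of_subset hsub
      have hmulS : (C / S Q + 1) * S Q = C + S Q := by
        rw [add_mul, one_mul, ENNReal.div_mul_cancel hs0 (hSfin Q)]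
      calc (∑ k ∈ Finset.Icc 1 Q, μ (B k)) ^ 2 /
            (∑ k ∈ Finset.Icc 1 Q, ∑ j ∈ Finset.Icc 1 Q, μ (B k ∩ B j))
          ≤ (C + S Q) ^ 2 / T Q :=
            ENNReal.div_le_div (pow_le_pow_left' hsplit 2) hTle
        _ = (C / S Q + 1) ^ 2 * (S Q ^ 2 / T Q) := by
            rw [← hmulS, mul_pow, mul_div_assoc]
        _ ≤ (C / S Q + 1) ^ 2 * μ U :=
            mul_le_mul_right (ENNReal.div_le_of_le_mul
              (chung_erdos_key μ B hB N Q)) _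
    have h0 : Tendsto (fun Q => C / S Q) atTop (𝓝 0) := by
      have := ENNReal.Tendsto.const_div (a := C) hStop (Or.inr hCfin)
      simpa [ENNReal.div_top] using this
    have h1 : Tendsto (fun Q => C / S Q + 1) atTop (𝓝 1) := by
      simpa using h0.add tendsto_const_nhds
    have hsq : Tendsto (fun Q => (C / S Q + 1) ^ 2) atTop (𝓝 1) := by
      have := ENNReal.Tendsto.mul h1 (Or.inl one_ne_zero) h1 (Or.inl one_ne_zero)
      simpa [sq] using this
    have hmul : Tendsto (fun Q => (C / S Q + 1) ^ 2 * μ U) atTop (𝓝 (μ U)) := by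
      have := ENNReal.Tendsto.mul_const (b := μ U) hsq (Or.inl one_ne_zero)
      simpa using this
    calc L ≤ Filter.atTop.limsup (fun Q => (C / S Q + 1) ^ 2 * μ U) :=
          limsup_le_limsup hev
      _ = μ U := hmul.limsup_eq
  have hlim : Filter.limsup B Filter.atTop = ⋂ n, ⋃ k ∈ Set.Ici n, B k := by
    rw [limsup_eq_iInf_iSup_of_nat]
    simp only [Set.iInf_eq_iInter, Set.iSup_eq_iUnion, ge_iff_le, Set.mem_Ici]
  have hanti : Antitone fun n => ⋃ k ∈ Set.Ici n, B k := fun a b hab =>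
    Set.biUnion_subset_biUnion_left (Set.Ici_subset_Ici.mpr hab)
  have hmeas : μ (⋂ n, ⋃ k ∈ Set.Ici n, B k) = ⨅ n, μ (⋃ k ∈ Set.Ici n, B k) :=
    Directed.measure_iInter
      (fun n => (MeasurableSet.biUnion (Set.to_countable _)
        fun k _ => hB k).nullMeasurableSet)
      hanti.directed_ge ⟨0, measure_ne_top μ _⟩
  rw [hlim, hmeas]
  refine le_iInf fun n => (main n).trans (measure_mono ?_)
  exact Set.biUnion_subset_biUnion_left (Set.Ici_subset_Ici.mpr (Nat.le_succ n))
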